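/- Let v be a finite-dimensional real inner product space and ρ : v → so(v) an injective linear map satisfying ρ(u)(v) + ρ(v)(u) = 0 for all u,v ∈ v. Define on n = v ⊕ v* the bracket [u+g, v+h] = f_{u,v} where f_{u,v}(w) = ⟨ρ(w)(u), v⟩, and the bilinear form φ(v₁+f₁, v₂+f₂) = f₁(v₂) + f₂(v₁). Then (n, φ) is a quadratic 2-step nilpotent Lie algebra with [n,n] = v* = Z(n); in particular n is reduced. -/
import Mathlib


open scoped RealInnerProductSpace

/-- The linear functional `f_{u,x} : w ↦ ⟪ρ(w)(u), x⟫`. -/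
noncomputable def fmap {v : Type*} [NormedAddCommGroup v] [InnerProductSpace ℝ v]
    (ρ : v →ₗ[ℝ] v →ₗ[ℝ] v) (u x : v) : Module.Dual ℝ v where
  toFun w := ⟪ρ w u, x⟫
  map_add' a b := by simp [map_add, inner_add_left]
  map_smul' c a := by simp [map_smul, inner_smul_left]

lemma fmap_apply {v : Type*} [NormedAddCommGroup v] [InnerProductSpace ℝ v]
    (ρ : v →ₗ[ℝ] v →ₗ[ℝ] v) (u x w : v) : fmap ρ u x w = ⟪ρ w u, x⟫ := rfl

lemma fmap_span_top {v : Type*} [NormedAddCommGroup v] [InnerProductSpace ℝ v]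
    [FiniteDimensional ℝ v] (ρ : v →ₗ[ℝ] v →ₗ[ℝ] v)
    (hinj : Function.Injective ρ) :
    Submodule.span ℝ {f : Module.Dual ℝ v | ∃ u x, fmap ρ u x = f} = ⊤ := by
  set W := Submodule.span ℝ {f : Module.Dual ℝ v | ∃ u x, fmap ρ u x = f}
  have hco : W.dualCoannihilator = ⊥ := by
    rw [Submodule.eq_bot_iff]
    intro w hw
    rw [Submodule.mem_dualCoannihilator] at hw
    have hz : ∀ u x : v, ⟪ρ w u, x⟫ = 0 := by
      intro u x
      exact hw _ (Submodule.subset_span ⟨u, x, rfl⟩)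
    have : ρ w = 0 := by
      ext u
      exact inner_self_eq_zero.mp (hz u (ρ w u))
    have := hinj (this.trans (map_zero ρ).symm)
    exact this
  have := congrArg Submodule.dualAnnihilator hco
  rwa [Subspace.dualCoannihilator_dualAnnihilator_eq, Submodule.dualAnnihilator_bot] at this

/-- For a finite-dimensional real inner product space `v` and an injective
linear `ρ : v → so(v)` with `ρ(u)(w) + ρ(w)(u) = 0`, the space `n = v ⊕ v*` with bracket
`[u+g, v+h] = f_{u,v}` and hyperbolic form `φ` is a quadratic 2-step nilpotent Lie
algebra with `[n,n] = v* = Z(n)`; in particular `n` is reduced. -/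
theorem stmt_5 {v : Type*} [NormedAddCommGroup v] [InnerProductSpace ℝ v]
    [FiniteDimensional ℝ v]
    (ρ : v →ₗ[ℝ] v →ₗ[ℝ] v)
    (hso : ∀ w a b : v, ⟪ρ w a, b⟫ = -⟪a, ρ w b⟫)
    (hinj : Function.Injective ρ)
    (hρ : ∀ u w : v, ρ u w + ρ w u = 0)
    (br : (v × Module.Dual ℝ v) → (v × Module.Dual ℝ v) → (v × Module.Dual ℝ v))
    (hbr : ∀ p q, br p q = (0, fmap ρ p.1 q.1))
    (φ : (v × Module.Dual ℝ v) → (v × Module.Dual ℝ v) → ℝ)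
    (hφ : ∀ p q, φ p q = p.2 q.1 + q.2 p.1) :
    -- anticommutativity
    (∀ p q, br p q = - br q p) ∧
    -- 2-step nilpotency (Jacobi holds trivially)
    (∀ p q r, br (br p q) r = 0) ∧
    -- φ is symmetric
    (∀ p q, φ p q = φ q p) ∧
    -- φ is nondegenerate
    (∀ p, (∀ q, φ p q = 0) → p = 0) ∧
    -- φ is invariant
    (∀ p q r, φ (br p q) r = φ p (br q r)) ∧
    -- [n,n] = v*
    Submodule.span ℝ {x | ∃ p q, br p q = x}
      = Submodule.prod (⊥ : Submodule ℝ v) (⊤ : Submodule ℝ (Module.Dual ℝ v)) ∧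
    -- Z(n) = v*, so n is reduced
    {p | ∀ q, br p q = 0}
      = (Submodule.prod (⊥ : Submodule ℝ v) (⊤ : Submodule ℝ (Module.Dual ℝ v)) : Set _) := by
  have hskew : ∀ u x : v, fmap ρ u x = - fmap ρ x u := by
    intro u x
    ext w
    simp only [fmap_apply, LinearMap.neg_apply]
    rw [hso w u x, real_inner_comm]
  have hfz : ∀ x : v, fmap ρ 0 x = 0 := by
    intro x; ext w; simp [fmap_apply]
  have hfz2 : ∀ u : v, fmap ρ u 0 = 0 := by
    intro u; ext w; simp [fmap_apply]
  refine ⟨?_, ?_, ?_, ?_, ?_, ?_, ?_⟩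
  · intro p q
    rw [hbr, hbr, hskew]
    ext <;> simp
  · intro p q r
    rw [hbr, hbr]
    simp [hfz, Prod.ext_iff]
  · intro p q
    rw [hφ, hφ]; ring
  · intro p hp
    have h1 : p.2 = 0 := by
      ext x
      have := hp (x, 0)
      rw [hφ] at this
      simpa using this
    have h2 : p.1 = 0 := by
      rw [← Module.forall_dual_apply_eq_zero_iff ℝ]
      intro f
      have := hp (0, f)
      rw [hφ] at this
      simpa [h1] using this
    exact Prod.ext h2 h1
  · intro p q r
    rw [hbr, hbr, hφ, hφ]
    simp only [fmap_apply, map_zero, add_zero, zero_add]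
    have h1 : ρ r.1 p.1 = - ρ p.1 r.1 := eq_neg_of_add_eq_zero_right (hρ p.1 r.1)
    rw [h1, inner_neg_left, hso p.1 r.1 q.1, real_inner_comm, neg_neg]
  · -- span of brackets = ⊥ × ⊤
    apply le_antisymm
    · rw [Submodule.span_le]
      rintro x ⟨p, q, rfl⟩
      rw [hbr]
      exact ⟨Submodule.zero_mem _, Submodule.mem_top⟩
    · rintro ⟨a, f⟩ ⟨ha, -⟩
      simp only [Submodule.mem_bot] at ha
      subst ha
      have hf : f ∈ Submodule.span ℝ {f : Module.Dual ℝ v | ∃ u x, fmap ρ u x = f} := by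
        rw [fmap_span_top ρ hinj]; trivial
      have : ((0 : v), f) = LinearMap.inr ℝ v (Module.Dual ℝ v) f := rfl
      rw [this]
      have hmem : LinearMap.inr ℝ v (Module.Dual ℝ v) f ∈ Submodule.span ℝ
          (LinearMap.inr ℝ v (Module.Dual ℝ v) '' {f | ∃ u x, fmap ρ u x = f}) := by
        rw [← Submodule.map_span]; exact Submodule.mem_map_of_mem hf
      refine Submodule.span_le.mpr ?_ hmem
      rintro y ⟨g, ⟨u, x, rfl⟩, rfl⟩
      exact Submodule.subset_span ⟨(u, 0), (x, 0), by rw [hbr]; rfl⟩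
  · ext p
    simp only [Set.mem_setOf_eq, SetLike.mem_coe, Submodule.mem_prod, Submodule.mem_bot,
      Submodule.mem_top, and_true]
    constructor
    · intro hp
      by_contra h
      have hall : ∀ x : v, fmap ρ p.1 x = 0 := by
        intro x
        have := hp (x, 0)
        rw [hbr] at this
        simpa [Prod.ext_iff] using this
      have hz : ∀ w x : v, ⟪ρ w p.1, x⟫ = 0 := by
        intro w x
        have := congrArg (fun f => f w) (hall x)
        simpa [fmap_apply] using this
      have h0 : ∀ w : v, ρ w p.1 = 0 := fun w =>
        inner_self_eq_zero.mp (hz w (ρ w p.1))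
      have : ρ p.1 = 0 := by
        ext w
        have := hρ p.1 w
        rw [h0 w, add_zero] at this
        exact this
      exact h (hinj (this.trans (map_zero ρ).symm))
    · intro h1 q
      rw [hbr, h1, hfz]
      rfl
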